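/- In the Bauer–Catanese case G = (ℤ/3ℤ)²: with F = Π₁ × Π₂ and K the kernel of (p,q) ↦ φ(p) − ψ(q), the quotient group ⁅F, F⁆ / ⁅K, K⁆ is isomorphic to ℤ/3ℤ. -/

import Mathlib

open scoped commutatorElement

----------------------------------------------------------------
-- Part 1: finite auxiliary groups
----------------------------------------------------------------

/-- Discrete Heisenberg group over `ZMod 3`. -/
@[ext] structure He3 where
  x : ZMod 3
  y : ZMod 3
  t : ZMod 3
deriving DecidableEq

instance : Mul He3 := ⟨fun a b => ⟨a.x + b.x, a.y + b.y, a.t + b.t + a.x * b.y⟩⟩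
instance : One He3 := ⟨⟨0, 0, 0⟩⟩
instance : Inv He3 := ⟨fun a => ⟨-a.x, -a.y, -a.t + a.x * a.y⟩⟩

@[simp] lemma He3.mul_x (a b : He3) : (a * b).x = a.x + b.x := rfl
@[simp] lemma He3.mul_y (a b : He3) : (a * b).y = a.y + b.y := rfl
@[simp] lemma He3.mul_t (a b : He3) : (a * b).t = a.t + b.t + a.x * b.y := rfl
@[simp] lemma He3.one_x : (1 : He3).x = 0 := rfl
@[simp] lemma He3.one_y : (1 : He3).y = 0 := rfl
@[simp] lemma He3.one_t : (1 : He3).t = 0 := rfl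
@[simp] lemma He3.inv_x (a : He3) : (a⁻¹).x = -a.x := rfl
@[simp] lemma He3.inv_y (a : He3) : (a⁻¹).y = -a.y := rfl
@[simp] lemma He3.inv_t (a : He3) : (a⁻¹).t = -a.t + a.x * a.y := rfl

instance : Group He3 where
  mul_assoc a b c := by ext <;> simp <;> ring
  one_mul a := by ext <;> simp
  mul_one a := by ext <;> simp
  inv_mul_cancel a := by ext <;> simp <;> ring

lemma He3.pow3 (g : He3) : g ^ 3 = 1 := by
  have h1 : ∀ a : ZMod 3, a + a + a = 0 := by decide
  have h2 : ∀ a b c : ZMod 3, a + a + b * c + a + (b + b) * c = 0 := by decide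
  rw [pow_succ, pow_succ, pow_one]
  ext <;> simp [h1, h2]

lemma He3.comm_formula (g h : He3) : ⁅g, h⁆ = ⟨0, 0, g.x * h.y - h.x * g.y⟩ := by
  show g * h * g⁻¹ * h⁻¹ = _
  ext <;> simp <;> ring

/-- Central product of two Heisenberg groups. -/
@[ext] structure CP3 where
  x1 : ZMod 3
  y1 : ZMod 3
  x2 : ZMod 3
  y2 : ZMod 3
  t : ZMod 3
deriving DecidableEq

instance : Mul CP3 :=
  ⟨fun a b => ⟨a.x1 + b.x1, a.y1 + b.y1, a.x2 + b.x2, a.y2 + b.y2,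
    a.t + b.t + a.x1 * b.y1 - a.x2 * b.y2⟩⟩
instance : One CP3 := ⟨⟨0,0,0,0,0⟩⟩
instance : Inv CP3 :=
  ⟨fun a => ⟨-a.x1, -a.y1, -a.x2, -a.y2, -a.t + a.x1 * a.y1 - a.x2 * a.y2⟩⟩

@[simp] lemma CP3.mul_x1 (a b : CP3) : (a * b).x1 = a.x1 + b.x1 := rfl
@[simp] lemma CP3.mul_y1 (a b : CP3) : (a * b).y1 = a.y1 + b.y1 := rfl
@[simp] lemma CP3.mul_x2 (a b : CP3) : (a * b).x2 = a.x2 + b.x2 := rfl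
@[simp] lemma CP3.mul_y2 (a b : CP3) : (a * b).y2 = a.y2 + b.y2 := rfl
@[simp] lemma CP3.mul_t (a b : CP3) :
    (a * b).t = a.t + b.t + a.x1 * b.y1 - a.x2 * b.y2 := rfl
@[simp] lemma CP3.one_x1 : (1 : CP3).x1 = 0 := rfl
@[simp] lemma CP3.one_y1 : (1 : CP3).y1 = 0 := rfl
@[simp] lemma CP3.one_x2 : (1 : CP3).x2 = 0 := rfl
@[simp] lemma CP3.one_y2 : (1 : CP3).y2 = 0 := rfl
@[simp] lemma CP3.one_t : (1 : CP3).t = 0 := rfl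
@[simp] lemma CP3.inv_x1 (a : CP3) : (a⁻¹).x1 = -a.x1 := rfl
@[simp] lemma CP3.inv_y1 (a : CP3) : (a⁻¹).y1 = -a.y1 := rfl
@[simp] lemma CP3.inv_x2 (a : CP3) : (a⁻¹).x2 = -a.x2 := rfl
@[simp] lemma CP3.inv_y2 (a : CP3) : (a⁻¹).y2 = -a.y2 := rfl
@[simp] lemma CP3.inv_t (a : CP3) : (a⁻¹).t = -a.t + a.x1 * a.y1 - a.x2 * a.y2 := rfl

instance : Group CP3 where
  mul_assoc a b c := by ext <;> simp <;> ring
  one_mul a := by ext <;> simp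
  mul_one a := by ext <;> simp
  inv_mul_cancel a := by ext <;> simp <;> ring

/-- The central-product projection `He3 × He3 →* CP3`. -/
def cpProj : He3 × He3 →* CP3 where
  toFun g := ⟨g.1.x, g.1.y, g.2.x, g.2.y, g.1.t - g.2.t⟩
  map_one' := rfl
  map_mul' a b := by ext <;> simp [Prod.mul_def] <;> ring

@[simp] lemma cpProj_x1 (g : He3 × He3) : (cpProj g).x1 = g.1.x := rfl
@[simp] lemma cpProj_y1 (g : He3 × He3) : (cpProj g).y1 = g.1.y := rfl
@[simp] lemma cpProj_x2 (g : He3 × He3) : (cpProj g).x2 = g.2.x := rfl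
@[simp] lemma cpProj_y2 (g : He3 × He3) : (cpProj g).y2 = g.2.y := rfl
@[simp] lemma cpProj_t (g : He3 × He3) : (cpProj g).t = g.1.t - g.2.t := rfl

/-- Projection of `He3` onto its abelianization `(ZMod 3)²` (multiplicative). -/
def heProj : He3 →* Multiplicative (ZMod 3 × ZMod 3) where
  toFun g := Multiplicative.ofAdd (g.x, g.y)
  map_one' := rfl
  map_mul' a b := rfl

----------------------------------------------------------------
-- Part 2: abstract class-2 commutator identities
----------------------------------------------------------------

section CommutatorLemmas

variable {H : Type*} [Group H]

lemma bc_comm_mul_left (a b c : H) : ⁅a * b, c⁆ = a * ⁅b, c⁆ * a⁻¹ * ⁅a, c⁆ := by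
  simp only [commutatorElement_def]; group

lemma bc_comm_mul_right (a b c : H) : ⁅a, b * c⁆ = ⁅a, b⁆ * (b * ⁅a, c⁆ * b⁻¹) := by
  simp only [commutatorElement_def]; group

lemma bc_comm_reduce_left (x m y : H) (h : Commute m y) : ⁅x * m, y⁆ = ⁅x, y⁆ := by
  have hm : m * y * m⁻¹ = y := by rw [h.eq, mul_inv_cancel_right]
  calc ⁅x * m, y⁆ = x * (m * y * m⁻¹) * x⁻¹ * y⁻¹ := by
        simp only [commutatorElement_def]; group
    _ = ⁅x, y⁆ := by rw [hm]; simp only [commutatorElement_def]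

lemma bc_comm_reduce_right (x y m : H) (h : Commute m x) : ⁅x, y * m⁆ = ⁅x, y⁆ := by
  have hm : m * x⁻¹ * m⁻¹ = x⁻¹ := by rw [h.inv_right.eq, mul_inv_cancel_right]
  calc ⁅x, y * m⁆ = x * y * (m * x⁻¹ * m⁻¹) * y⁻¹ := by
        simp only [commutatorElement_def]; group
    _ = ⁅x, y⁆ := by rw [hm]; simp only [commutatorElement_def]

lemma bc_comm_pow_right (x y : H) (hy : Commute ⁅x, y⁆ y) (n : ℕ) :
    ⁅x, y ^ n⁆ = ⁅x, y⁆ ^ n := by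
  induction n with
  | zero => simp
  | succ n ih =>
    rw [pow_succ, bc_comm_mul_right, ih]
    have : y ^ n * ⁅x, y⁆ * (y ^ n)⁻¹ = ⁅x, y⁆ := by
      rw [((hy.symm).pow_left n).eq, mul_inv_cancel_right]
    rw [this, ← pow_succ]

lemma bc_comm_pow_pow (x y : H) (hx : Commute ⁅x, y⁆ x) (hy : Commute ⁅x, y⁆ y) (m n : ℕ) :
    ⁅x ^ m, y ^ n⁆ = ⁅x, y⁆ ^ (m * n) := by
  induction m with
  | zero => simp
  | succ m ih =>
    rw [pow_succ', bc_comm_mul_left, ih, bc_comm_pow_right x y hy n]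
    have : x * ⁅x, y⁆ ^ (m * n) * x⁻¹ = ⁅x, y⁆ ^ (m * n) := by
      rw [(hx.symm.pow_right (m * n)).eq, mul_inv_cancel_right]
    rw [this, ← pow_add]
    ring_nf

lemma bc_comm_expand_mem (x y : H) (hx : Commute ⁅x, y⁆ x) (hy : Commute ⁅x, y⁆ y)
    (m n k l : ℕ) : ⁅x ^ m * y ^ n, x ^ k * y ^ l⁆ ∈ Subgroup.zpowers ⁅x, y⁆ := by
  have hyx : ⁅y, x⁆ = ⁅x, y⁆⁻¹ := (commutatorElement_inv x y).symm
  have hyx_x : Commute ⁅y, x⁆ x := by rw [hyx]; exact hx.inv_left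
  have hyx_y : Commute ⁅y, x⁆ y := by rw [hyx]; exact hy.inv_left
  have h1 : ⁅y ^ n, x ^ k * y ^ l⁆ = ⁅x, y⁆⁻¹ ^ (n * k) := by
    rw [bc_comm_reduce_right _ _ _ ((Commute.refl y).pow_pow l n),
      bc_comm_pow_pow y x hyx_y hyx_x, hyx]
  have h2 : ⁅x ^ m, x ^ k * y ^ l⁆ = ⁅x, y⁆ ^ (m * l) := by
    rw [bc_comm_mul_right]
    rw [((Commute.refl x).pow_pow m k).commutator_eq, one_mul]
    rw [bc_comm_pow_pow x y hx hy m l]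
    rw [((hx.symm.pow_left k).pow_right (m * l)).eq, mul_inv_cancel_right]
  rw [bc_comm_mul_left, h1, h2]
  have h3 : x ^ m * ⁅x, y⁆⁻¹ ^ (n * k) * (x ^ m)⁻¹ = ⁅x, y⁆⁻¹ ^ (n * k) := by
    rw [(((hx.inv_left).symm.pow_left m).pow_right (n * k)).eq, mul_inv_cancel_right]
  rw [h3]
  exact mul_mem (pow_mem (inv_mem (Subgroup.mem_zpowers _)) _)
    (pow_mem (Subgroup.mem_zpowers _) _)

lemma bc_prod_commutator {G H : Type*} [Group G] [Group H] (a c : G) (b d : H) :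
    ⁅((a, b) : G × H), (c, d)⁆ = (⁅a, c⁆, ⁅b, d⁆) := rfl

end CommutatorLemmas

----------------------------------------------------------------
-- Part 3: statement-specific definitions
----------------------------------------------------------------

/-- Relators of `Π₁ = ⟨a₁,…,a₄ ∣ a₁³,…,a₄³, a₁a₂a₃a₄⟩`. -/
def bcRels₁ : Set (FreeGroup (Fin 4)) :=
  {FreeGroup.of 0 ^ 3, FreeGroup.of 1 ^ 3, FreeGroup.of 2 ^ 3, FreeGroup.of 3 ^ 3,
   FreeGroup.of 0 * FreeGroup.of 1 * FreeGroup.of 2 * FreeGroup.of 3}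

/-- Relators of `Π₂ = ⟨b₁,…,b₄ ∣ b₁³,…,b₄³, b₁b₂b₃b₄⟩`. -/
def bcRels₂ : Set (FreeGroup (Fin 4)) :=
  {FreeGroup.of 0 ^ 3, FreeGroup.of 1 ^ 3, FreeGroup.of 2 ^ 3, FreeGroup.of 3 ^ 3,
   FreeGroup.of 0 * FreeGroup.of 1 * FreeGroup.of 2 * FreeGroup.of 3}

/-- The group `G = (ℤ/3ℤ)²`, written multiplicatively. -/
abbrev bcG : Type := Multiplicative (ZMod 3 × ZMod 3)

/-- cube relator in `Π₁` -/
lemma bc_cube₁ (i : Fin 4) : (PresentedGroup.of i : PresentedGroup bcRels₁) ^ 3 = 1 := by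
  have h : (FreeGroup.of i : FreeGroup (Fin 4)) ^ 3 ∈ bcRels₁ := by
    fin_cases i <;> simp [bcRels₁]
  show (PresentedGroup.mk bcRels₁ (FreeGroup.of i)) ^ 3 = 1
  rw [← map_pow]
  exact (QuotientGroup.eq_one_iff _).mpr (Subgroup.subset_normalClosure h)

/-- cube relator in `Π₂` -/
lemma bc_cube₂ (i : Fin 4) : (PresentedGroup.of i : PresentedGroup bcRels₂) ^ 3 = 1 := by
  have h : (FreeGroup.of i : FreeGroup (Fin 4)) ^ 3 ∈ bcRels₂ := by
    fin_cases i <;> simp [bcRels₂]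
  show (PresentedGroup.mk bcRels₂ (FreeGroup.of i)) ^ 3 = 1
  rw [← map_pow]
  exact (QuotientGroup.eq_one_iff _).mpr (Subgroup.subset_normalClosure h)

/-- section of `φ` -/
def bcEps (g : bcG) : PresentedGroup bcRels₁ :=
  PresentedGroup.of 0 ^ (Multiplicative.toAdd g).1.val *
    PresentedGroup.of 1 ^ (Multiplicative.toAdd g).2.val

/-- section of `ψ` -/
def bcSec (g : bcG) : PresentedGroup bcRels₂ :=
  PresentedGroup.of 0 ^ (2 * ((Multiplicative.toAdd g).1 + (Multiplicative.toAdd g).2)).val *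
    PresentedGroup.of 1 ^ (2 * ((Multiplicative.toAdd g).1 - (Multiplicative.toAdd g).2)).val

lemma bc_key1 : ∀ u v : ZMod 3,
    (Multiplicative.ofAdd ((1 : ZMod 3), (0 : ZMod 3))) ^ u.val *
      (Multiplicative.ofAdd ((0 : ZMod 3), (1 : ZMod 3))) ^ v.val
      = Multiplicative.ofAdd (u, v) := by decide

lemma bc_key2 : ∀ u v : ZMod 3,
    (Multiplicative.ofAdd ((1 : ZMod 3), (1 : ZMod 3))) ^ (2 * (u + v)).val *
      (Multiplicative.ofAdd ((1 : ZMod 3), (-1 : ZMod 3))) ^ (2 * (u - v)).val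
      = Multiplicative.ofAdd (u, v) := by decide

/-- generators for the representation `Π₁ →* He3` -/
def heGen₁ : Fin 4 → He3 := ![⟨1, 0, 2⟩, ⟨0, 1, 0⟩, ⟨2, 0, 0⟩, ⟨0, 2, 0⟩]

/-- generators for the representation `Π₂ →* He3` -/
def heGen₂ : Fin 4 → He3 := ![⟨1, 1, 2⟩, ⟨1, 2, 0⟩, ⟨2, 2, 0⟩, ⟨2, 1, 0⟩]

lemma heGen₁_rels : ∀ r ∈ bcRels₁, FreeGroup.lift heGen₁ r = 1 := by
  intro r hr
  simp only [bcRels₁, Set.mem_insert_iff, Set.mem_singleton_iff] at hr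
  rcases hr with rfl | rfl | rfl | rfl | rfl <;>
    simp only [map_pow, map_mul, FreeGroup.lift_apply_of] <;>
    first
      | exact He3.pow3 _
      | decide

lemma heGen₂_rels : ∀ r ∈ bcRels₂, FreeGroup.lift heGen₂ r = 1 := by
  intro r hr
  simp only [bcRels₂, Set.mem_insert_iff, Set.mem_singleton_iff] at hr
  rcases hr with rfl | rfl | rfl | rfl | rfl <;>
    simp only [map_pow, map_mul, FreeGroup.lift_apply_of] <;>
    first
      | exact He3.pow3 _
      | decide

/-- The representation `Π₁ →* He3`. -/
def bcθ₁ : PresentedGroup bcRels₁ →* He3 := PresentedGroup.toGroup heGen₁_rels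

/-- The representation `Π₂ →* He3`. -/
def bcθ₂ : PresentedGroup bcRels₂ →* He3 := PresentedGroup.toGroup heGen₂_rels

/-- Bauer–Catanese case `G = (ℤ/3ℤ)²`. With `F = Π₁ × Π₂` and `K` the
kernel of `(p,q) ↦ φ(p) - ψ(q)`, the quotient `⁅F,F⁆/⁅K,K⁆` (realized as the image
of `⁅F,F⁆` in `F/⁅K,K⁆`) is isomorphic to `ℤ/3ℤ`. -/
theorem bauer_catanese_Z3_commutator_quotient
    (φ : PresentedGroup bcRels₁ →* bcG) (ψ : PresentedGroup bcRels₂ →* bcG)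
    (hφ0 : φ (PresentedGroup.of 0) = Multiplicative.ofAdd (1, 0))
    (hφ1 : φ (PresentedGroup.of 1) = Multiplicative.ofAdd (0, 1))
    (hφ2 : φ (PresentedGroup.of 2) = Multiplicative.ofAdd (-1, 0))
    (hφ3 : φ (PresentedGroup.of 3) = Multiplicative.ofAdd (0, -1))
    (hψ0 : ψ (PresentedGroup.of 0) = Multiplicative.ofAdd (1, 1))
    (hψ1 : ψ (PresentedGroup.of 1) = Multiplicative.ofAdd (1, -1))
    (hψ2 : ψ (PresentedGroup.of 2) = Multiplicative.ofAdd (-1, -1))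
    (hψ3 : ψ (PresentedGroup.of 3) = Multiplicative.ofAdd (-1, 1)) :
    Nonempty
      ((Subgroup.map
          (QuotientGroup.mk'
            ⁅MonoidHom.ker
                (φ.comp (MonoidHom.fst (PresentedGroup bcRels₁) (PresentedGroup bcRels₂)) /
                  ψ.comp (MonoidHom.snd (PresentedGroup bcRels₁) (PresentedGroup bcRels₂))),
              MonoidHom.ker
                (φ.comp (MonoidHom.fst (PresentedGroup bcRels₁) (PresentedGroup bcRels₂)) /
                  ψ.comp (MonoidHom.snd (PresentedGroup bcRels₁) (PresentedGroup bcRels₂)))⁆)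
          ⁅(⊤ : Subgroup (PresentedGroup bcRels₁ × PresentedGroup bcRels₂)),
            (⊤ : Subgroup (PresentedGroup bcRels₁ × PresentedGroup bcRels₂))⁆) ≃*
        Multiplicative (ZMod 3)) := by
  haveI : Fact (Nat.Prime 3) := ⟨by norm_num⟩
  set χ := φ.comp (MonoidHom.fst (PresentedGroup bcRels₁) (PresentedGroup bcRels₂)) /
      ψ.comp (MonoidHom.snd (PresentedGroup bcRels₁) (PresentedGroup bcRels₂)) with hχdef
  set K := MonoidHom.ker χ with hKdef
  set N := ⁅K, K⁆ with hNdef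
  set π := QuotientGroup.mk' N with hπdef
  -- sections
  have hεφ : ∀ g : bcG, φ (bcEps g) = g := by
    intro g
    unfold bcEps
    rw [map_mul, map_pow, map_pow, hφ0, hφ1, bc_key1]
    exact ofAdd_toAdd g
  have hσψ : ∀ g : bcG, ψ (bcSec g) = g := by
    intro g
    unfold bcSec
    rw [map_mul, map_pow, map_pow, hψ0, hψ1, bc_key2]
    exact ofAdd_toAdd g
  -- membership in K
  have hmemK : ∀ (p : PresentedGroup bcRels₁) (q : PresentedGroup bcRels₂),
      φ p = ψ q → ((p, q) : PresentedGroup bcRels₁ × PresentedGroup bcRels₂) ∈ K := by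
    intro p q h
    rw [hKdef, MonoidHom.mem_ker, hχdef]
    simp only [MonoidHom.div_apply, MonoidHom.comp_apply, MonoidHom.coe_fst, MonoidHom.coe_snd]
    rw [h]
    exact div_self' _
  -- π kills commutators of K-elements
  have hπK : ∀ w w', w ∈ K → w' ∈ K → π ⁅w, w'⁆ = 1 := by
    intro w w' hw hw'
    rw [hπdef, QuotientGroup.mk'_apply, QuotientGroup.eq_one_iff]
    exact Subgroup.commutator_mem_commutator hw hw'
  -- commutators with factor-1 kernel elements die in the quotient
  have hA1 : ∀ (p n : PresentedGroup bcRels₁), n ∈ MonoidHom.ker φ →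
      Commute (π (p, 1)) (π (n, 1)) := by
    intro p n hn
    have h1 : ((p, bcSec (φ p)) : _ × _) ∈ K := hmemK _ _ (hσψ (φ p)).symm
    have h2 : ((n, (1 : PresentedGroup bcRels₂)) : _ × _) ∈ K :=
      hmemK n 1 (by rw [MonoidHom.mem_ker.mp hn, map_one])
    have h3 := hπK _ _ h1 h2
    rw [← commutatorElement_eq_one_iff_commute, ← map_commutatorElement, bc_prod_commutator,
      commutatorElement_self]
    rw [bc_prod_commutator, commutatorElement_one_right] at h3
    exact h3
  have hA2 : ∀ (q n : PresentedGroup bcRels₂), n ∈ MonoidHom.ker ψ →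
      Commute (π (1, q)) (π (1, n)) := by
    intro q n hn
    have h1 : ((bcEps (ψ q), q) : _ × _) ∈ K := hmemK _ _ (hεφ (ψ q))
    have h2 : (((1 : PresentedGroup bcRels₁), n) : _ × _) ∈ K :=
      hmemK 1 n (by rw [MonoidHom.mem_ker.mp hn, map_one])
    have h3 := hπK _ _ h1 h2
    rw [← commutatorElement_eq_one_iff_commute, ← map_commutatorElement, bc_prod_commutator,
      commutatorElement_self]
    rw [bc_prod_commutator, commutatorElement_one_right] at h3
    exact h3
  -- kernels of φ, ψ contain all commutators
  have hker1 : ∀ p p' : PresentedGroup bcRels₁, ⁅p, p'⁆ ∈ MonoidHom.ker φ := by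
    intro p p'
    rw [MonoidHom.mem_ker, map_commutatorElement]
    exact commutatorElement_eq_one_iff_commute.mpr (Commute.all _ _)
  have hker2 : ∀ q q' : PresentedGroup bcRels₂, ⁅q, q'⁆ ∈ MonoidHom.ker ψ := by
    intro q q'
    rw [MonoidHom.mem_ker, map_commutatorElement]
    exact commutatorElement_eq_one_iff_commute.mpr (Commute.all _ _)
  -- moving commutators through π on each factor
  have hπ1 : ∀ p p' : PresentedGroup bcRels₁,
      π (⁅p, p'⁆, 1) = ⁅π (p, 1), π (p', 1)⁆ := by
    intro p p'
    have h : ⁅((p, (1 : PresentedGroup bcRels₂)) : _ × _),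
          ((p', (1 : PresentedGroup bcRels₂)) : _ × _)⁆
        = ((⁅p, p'⁆ : PresentedGroup bcRels₁), (1 : PresentedGroup bcRels₂)) := by
      rw [bc_prod_commutator, commutatorElement_self]
    rw [← map_commutatorElement, h]
  have hπ2 : ∀ q q' : PresentedGroup bcRels₂,
      π (1, ⁅q, q'⁆) = ⁅π (1, q), π (1, q')⁆ := by
    intro q q'
    have h : ⁅(((1 : PresentedGroup bcRels₁), q) : _ × _),
          (((1 : PresentedGroup bcRels₁), q') : _ × _)⁆
        = ((1 : PresentedGroup bcRels₁), (⁅q, q'⁆ : PresentedGroup bcRels₂)) := by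
      rw [bc_prod_commutator, commutatorElement_self]
    rw [← map_commutatorElement, h]
  have hπm1 : ∀ a b : PresentedGroup bcRels₁, π (a * b, 1) = π (a, 1) * π (b, 1) := by
    intro a b
    have h : ((a * b, (1 : PresentedGroup bcRels₂)) : _ × _)
        = (a, (1 : PresentedGroup bcRels₂)) * (b, 1) := by
      rw [Prod.mk_mul_mk, mul_one]
    rw [h, map_mul]
  have hπm2 : ∀ a b : PresentedGroup bcRels₂, π (1, a * b) = π (1, a) * π (1, b) := by
    intro a b
    have h : (((1 : PresentedGroup bcRels₁), a * b) : _ × _)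
        = ((1 : PresentedGroup bcRels₁), a) * (1, b) := by
      rw [Prod.mk_mul_mk, mul_one]
    rw [h, map_mul]
  have hπp1 : ∀ (a : PresentedGroup bcRels₁) (nn : ℕ), π (a ^ nn, 1) = π (a, 1) ^ nn := by
    intro a nn
    have h : ((a ^ nn, (1 : PresentedGroup bcRels₂)) : _ × _)
        = ((a, (1 : PresentedGroup bcRels₂))) ^ nn := by
      rw [Prod.pow_mk, one_pow]
    rw [h, map_pow]
  -- reduction of commutators to section values, factor 1
  have hL2 : ∀ p p' : PresentedGroup bcRels₁,
      π (⁅p, p'⁆, 1) = π (⁅bcEps (φ p), bcEps (φ p')⁆, 1) := by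
    intro p p'
    have hm : (bcEps (φ p))⁻¹ * p ∈ MonoidHom.ker φ := by
      rw [MonoidHom.mem_ker, map_mul, map_inv, hεφ, inv_mul_cancel]
    have hm' : (bcEps (φ p'))⁻¹ * p' ∈ MonoidHom.ker φ := by
      rw [MonoidHom.mem_ker, map_mul, map_inv, hεφ, inv_mul_cancel]
    have hp : p = bcEps (φ p) * ((bcEps (φ p))⁻¹ * p) := by group
    have hp' : p' = bcEps (φ p') * ((bcEps (φ p'))⁻¹ * p') := by group
    rw [hπ1, hπ1]
    conv_lhs => rw [hp, hp']
    rw [hπm1 (bcEps (φ p)) ((bcEps (φ p))⁻¹ * p),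
      hπm1 (bcEps (φ p')) ((bcEps (φ p'))⁻¹ * p')]
    rw [bc_comm_reduce_left _ _ _
      ((hA1 (bcEps (φ p')) _ hm).symm.mul_right
        ((hA1 ((bcEps (φ p'))⁻¹ * p') _ hm).symm))]
    rw [bc_comm_reduce_right _ _ _ ((hA1 (bcEps (φ p)) _ hm').symm)]
  -- reduction of commutators to section values, factor 2
  have hL2q : ∀ q q' : PresentedGroup bcRels₂,
      π (1, ⁅q, q'⁆) = π (1, ⁅bcSec (ψ q), bcSec (ψ q')⁆) := by
    intro q q'
    have hm : (bcSec (ψ q))⁻¹ * q ∈ MonoidHom.ker ψ := by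
      rw [MonoidHom.mem_ker, map_mul, map_inv, hσψ, inv_mul_cancel]
    have hm' : (bcSec (ψ q'))⁻¹ * q' ∈ MonoidHom.ker ψ := by
      rw [MonoidHom.mem_ker, map_mul, map_inv, hσψ, inv_mul_cancel]
    have hp : q = bcSec (ψ q) * ((bcSec (ψ q))⁻¹ * q) := by group
    have hp' : q' = bcSec (ψ q') * ((bcSec (ψ q'))⁻¹ * q') := by group
    rw [hπ2, hπ2]
    conv_lhs => rw [hp, hp']
    rw [hπm2 (bcSec (ψ q)) ((bcSec (ψ q))⁻¹ * q),
      hπm2 (bcSec (ψ q')) ((bcSec (ψ q'))⁻¹ * q')]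
    rw [bc_comm_reduce_left _ _ _
      ((hA2 (bcSec (ψ q')) _ hm).symm.mul_right
        ((hA2 ((bcSec (ψ q'))⁻¹ * q') _ hm).symm))]
    rw [bc_comm_reduce_right _ _ _ ((hA2 (bcSec (ψ q)) _ hm').symm)]
  -- the distinguished generator
  set c := ⁅π ((PresentedGroup.of 0 : PresentedGroup bcRels₁), 1),
      π ((PresentedGroup.of 1 : PresentedGroup bcRels₁), 1)⁆ with hcdef
  have hcx : Commute c (π ((PresentedGroup.of 0 : PresentedGroup bcRels₁), 1)) := by
    rw [hcdef, ← hπ1]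
    exact (hA1 _ _ (hker1 _ _)).symm
  have hcy : Commute c (π ((PresentedGroup.of 1 : PresentedGroup bcRels₁), 1)) := by
    rw [hcdef, ← hπ1]
    exact (hA1 _ _ (hker1 _ _)).symm
  -- values on sections lie in the powers of c
  have hmemB : ∀ g h : bcG, π (⁅bcEps g, bcEps h⁆, 1) ∈ Subgroup.zpowers c := by
    intro g h
    rw [hπ1]
    unfold bcEps
    rw [hπm1, hπm1, hπp1, hπp1, hπp1, hπp1]
    exact bc_comm_expand_mem _ _ hcx hcy _ _ _ _
  -- c has order dividing 3
  have hc3 : c ^ 3 = 1 := by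
    have h1 := (bc_comm_pow_right _ _ hcy 3).symm
    rw [← hcdef] at h1
    rw [h1, ← hπp1, bc_cube₁]
    have : ((1 : PresentedGroup bcRels₁), (1 : PresentedGroup bcRels₂))
        = (1 : PresentedGroup bcRels₁ × PresentedGroup bcRels₂) := rfl
    rw [this, map_one, commutatorElement_one_right]
  -- cross relation between the two factors
  have hcross : ∀ g h : bcG,
      π (1, ⁅bcSec g, bcSec h⁆) = (π (⁅bcEps g, bcEps h⁆, 1))⁻¹ := by
    intro g h
    have h1 : ((bcEps g, bcSec g) : _ × _) ∈ K := hmemK _ _ (by rw [hεφ, hσψ])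
    have h2 : ((bcEps h, bcSec h) : _ × _) ∈ K := hmemK _ _ (by rw [hεφ, hσψ])
    have h3 := hπK _ _ h1 h2
    rw [bc_prod_commutator] at h3
    have h4 : ((⁅bcEps g, bcEps h⁆, ⁅bcSec g, bcSec h⁆) :
          PresentedGroup bcRels₁ × PresentedGroup bcRels₂)
        = (⁅bcEps g, bcEps h⁆, 1) * (1, ⁅bcSec g, bcSec h⁆) := by
      rw [Prod.mk_mul_mk, mul_one, one_mul]
    rw [h4, map_mul] at h3
    exact (inv_eq_of_mul_eq_one_right h3).symm
  -- all commutators land in the powers of c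
  have hmain : ∀ w w' : PresentedGroup bcRels₁ × PresentedGroup bcRels₂,
      π ⁅w, w'⁆ ∈ Subgroup.zpowers c := by
    intro w w'
    obtain ⟨p, q⟩ := w
    obtain ⟨p', q'⟩ := w'
    rw [bc_prod_commutator]
    have hsplit : ((⁅p, p'⁆, ⁅q, q'⁆) : PresentedGroup bcRels₁ × PresentedGroup bcRels₂)
        = (⁅p, p'⁆, 1) * (1, ⁅q, q'⁆) := by
      rw [Prod.mk_mul_mk, mul_one, one_mul]
    rw [hsplit, map_mul]
    refine mul_mem ?_ ?_
    · rw [hL2]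
      exact hmemB _ _
    · rw [hL2q, hcross]
      exact inv_mem (hmemB _ _)
  -- the finite representation detects c
  have hpr1 : ∀ p, heProj (bcθ₁ p) = φ p := by
    have h : heProj.comp bcθ₁ = φ := by
      refine PresentedGroup.ext fun i => ?_
      fin_cases i
      · show (heProj.comp bcθ₁) (PresentedGroup.of 0) = φ (PresentedGroup.of 0)
        simp only [MonoidHom.comp_apply, bcθ₁, PresentedGroup.toGroup.of]
        rw [hφ0]; decide
      · show (heProj.comp bcθ₁) (PresentedGroup.of 1) = φ (PresentedGroup.of 1)
        simp only [MonoidHom.comp_apply, bcθ₁, PresentedGroup.toGroup.of]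
        rw [hφ1]; decide
      · show (heProj.comp bcθ₁) (PresentedGroup.of 2) = φ (PresentedGroup.of 2)
        simp only [MonoidHom.comp_apply, bcθ₁, PresentedGroup.toGroup.of]
        rw [hφ2]; decide
      · show (heProj.comp bcθ₁) (PresentedGroup.of 3) = φ (PresentedGroup.of 3)
        simp only [MonoidHom.comp_apply, bcθ₁, PresentedGroup.toGroup.of]
        rw [hφ3]; decide
    intro p
    exact DFunLike.congr_fun h p
  have hpr2 : ∀ q, heProj (bcθ₂ q) = ψ q := by
    have h : heProj.comp bcθ₂ = ψ := by
      refine PresentedGroup.ext fun i => ?_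
      fin_cases i
      · show (heProj.comp bcθ₂) (PresentedGroup.of 0) = ψ (PresentedGroup.of 0)
        simp only [MonoidHom.comp_apply, bcθ₂, PresentedGroup.toGroup.of]
        rw [hψ0]; decide
      · show (heProj.comp bcθ₂) (PresentedGroup.of 1) = ψ (PresentedGroup.of 1)
        simp only [MonoidHom.comp_apply, bcθ₂, PresentedGroup.toGroup.of]
        rw [hψ1]; decide
      · show (heProj.comp bcθ₂) (PresentedGroup.of 2) = ψ (PresentedGroup.of 2)
        simp only [MonoidHom.comp_apply, bcθ₂, PresentedGroup.toGroup.of]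
        rw [hψ2]; decide
      · show (heProj.comp bcθ₂) (PresentedGroup.of 3) = ψ (PresentedGroup.of 3)
        simp only [MonoidHom.comp_apply, bcθ₂, PresentedGroup.toGroup.of]
        rw [hψ3]; decide
    intro q
    exact DFunLike.congr_fun h q
  have hkey : ∀ (p : PresentedGroup bcRels₁) (q : PresentedGroup bcRels₂), φ p = ψ q →
      (bcθ₁ p).x = (bcθ₂ q).x ∧ (bcθ₁ p).y = (bcθ₂ q).y := by
    intro p q h
    have h' : heProj (bcθ₁ p) = heProj (bcθ₂ q) := by rw [hpr1, hpr2, h]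
    exact ⟨congrArg (fun z => (Multiplicative.toAdd z).1) h',
      congrArg (fun z => (Multiplicative.toAdd z).2) h'⟩
  set θ := cpProj.comp (bcθ₁.prodMap bcθ₂) with hθdef
  have hθker : N ≤ MonoidHom.ker θ := by
    rw [hNdef]
    refine Subgroup.commutator_le.mpr ?_
    intro w hw w' hw'
    rw [MonoidHom.mem_ker]
    obtain ⟨p, q⟩ := w
    obtain ⟨p', q'⟩ := w'
    have h1 : φ p = ψ q := by
      rw [hKdef, MonoidHom.mem_ker, hχdef] at hw
      simp only [MonoidHom.div_apply, MonoidHom.comp_apply, MonoidHom.coe_fst,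
        MonoidHom.coe_snd] at hw
      exact div_eq_one.mp hw
    have h2 : φ p' = ψ q' := by
      rw [hKdef, MonoidHom.mem_ker, hχdef] at hw'
      simp only [MonoidHom.div_apply, MonoidHom.comp_apply, MonoidHom.coe_fst,
        MonoidHom.coe_snd] at hw'
      exact div_eq_one.mp hw'
    obtain ⟨ha1, hb1⟩ := hkey p q h1
    obtain ⟨ha2, hb2⟩ := hkey p' q' h2
    rw [hθdef, MonoidHom.comp_apply, map_commutatorElement]
    have e1 : (bcθ₁.prodMap bcθ₂) (p, q) = (bcθ₁ p, bcθ₂ q) := rfl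
    have e2 : (bcθ₁.prodMap bcθ₂) (p', q') = (bcθ₁ p', bcθ₂ q') := rfl
    rw [e1, e2, bc_prod_commutator, He3.comm_formula, He3.comm_formula]
    ext <;> simp [ha1, hb1, ha2, hb2]
  have hcne : c ≠ 1 := by
    intro hone
    have h1 : QuotientGroup.lift N θ hθker c = 1 := by rw [hone, map_one]
    have h2 : QuotientGroup.lift N θ hθker c
        = θ (⁅(PresentedGroup.of 0 : PresentedGroup bcRels₁), PresentedGroup.of 1⁆, 1) := by
      rw [hcdef, ← hπ1, hπdef, QuotientGroup.mk'_apply]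
      exact QuotientGroup.lift_mk' N hθker _
    have h3 : θ (⁅(PresentedGroup.of 0 : PresentedGroup bcRels₁), PresentedGroup.of 1⁆, 1)
        = (⟨0, 0, 0, 0, 1⟩ : CP3) := by
      rw [hθdef, MonoidHom.comp_apply]
      have e1 : (bcθ₁.prodMap bcθ₂)
            (⁅(PresentedGroup.of 0 : PresentedGroup bcRels₁), PresentedGroup.of 1⁆, 1)
          = (bcθ₁ ⁅(PresentedGroup.of 0 : PresentedGroup bcRels₁), PresentedGroup.of 1⁆,
              bcθ₂ 1) := by
        rw [MonoidHom.prodMap_def, MonoidHom.prod_apply, MonoidHom.comp_apply,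
          MonoidHom.comp_apply, MonoidHom.coe_fst, MonoidHom.coe_snd]
      rw [e1, map_one, map_commutatorElement]
      rw [show bcθ₁ (PresentedGroup.of 0) = heGen₁ 0 from PresentedGroup.toGroup.of _,
        show bcθ₁ (PresentedGroup.of 1) = heGen₁ 1 from PresentedGroup.toGroup.of _]
      rfl
    rw [h2, h3] at h1
    exact one_ne_zero (congrArg CP3.t h1)
  -- identification of the image subgroup
  have hQ : Subgroup.map π
      ⁅(⊤ : Subgroup (PresentedGroup bcRels₁ × PresentedGroup bcRels₂)), ⊤⁆
      = Subgroup.zpowers c := by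
    apply le_antisymm
    · rw [Subgroup.map_commutator]
      refine Subgroup.commutator_le.mpr ?_
      intro x hx y hy
      obtain ⟨w, -, rfl⟩ := Subgroup.mem_map.mp hx
      obtain ⟨w', -, rfl⟩ := Subgroup.mem_map.mp hy
      rw [← map_commutatorElement]
      exact hmain w w'
    · rw [Subgroup.zpowers_le]
      refine Subgroup.mem_map.mpr
        ⟨⁅((PresentedGroup.of 0 : PresentedGroup bcRels₁), (1 : PresentedGroup bcRels₂)),
          ((PresentedGroup.of 1 : PresentedGroup bcRels₁), 1)⁆,
          Subgroup.commutator_mem_commutator (Subgroup.mem_top _) (Subgroup.mem_top _), ?_⟩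
      rw [map_commutatorElement, hcdef]
  -- conclusion
  have horder : orderOf c = 3 := orderOf_eq_prime hc3 hcne
  have hcard : Nat.card (Subgroup.zpowers c) = 3 := by rw [Nat.card_zpowers, horder]
  have hcyc : IsCyclic (Subgroup.zpowers c) := isCyclic_of_prime_card hcard
  have e := (zmodCyclicMulEquiv hcyc).symm
  rw [hcard] at e
  rw [hQ]
  exact ⟨e⟩
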